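/- arXiv:2212.10048 — 2 statements merged into one kernel-verified Lean document; each statement's English description precedes it below -/
import Mathlib

section
/- Let H be a real inner product space and let f : H → ℝ be differentiable with gradient ∇f, where ∇f is L-Lipschitz: ‖∇f(x) − ∇f(y)‖ ≤ L·‖x − y‖ for all x, y ∈ H. Let η > 0, let x, u ∈ H, and set x' = x − η·∇f(u). Then f(x') − f(x) ≤ ((L + 1)/2 − 1/η)·‖x' − x‖² + (L²/2)·‖x − u‖². -/
open InnerProductSpace

local notation "⟪" a ", " b "⟫" => @inner ℝ _ _ a b

private lemma line_hasDerivAt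
    {H : Type*} [NormedAddCommGroup H] [InnerProductSpace ℝ H] [CompleteSpace H]
    (f : H → ℝ) (g : H → H) (hgrad : ∀ x, HasGradientAt f (g x) x)
    (x d : H) (t : ℝ) :
    HasDerivAt (fun s : ℝ => f (x + s • d)) ⟪g (x + t • d), d⟫ t := by
  have hline : HasDerivAt (fun s : ℝ => x + s • d) d t := by
    simpa using ((hasDerivAt_id t).smul_const d).const_add x
  have hf := (hgrad (x + t • d)).hasFDerivAt
  have := hf.comp_hasDerivAt t hline
  simp [InnerProductSpace.toDual_apply_apply, Function.comp_def] at this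
  exact this

/-- Descent lemma for an `L`-Lipschitz gradient. -/
private lemma descent_lemma
    {H : Type*} [NormedAddCommGroup H] [InnerProductSpace ℝ H] [CompleteSpace H]
    (f : H → ℝ) (g : H → H) (L : ℝ)
    (hgrad : ∀ x, HasGradientAt f (g x) x)
    (hlip : ∀ x y, ‖g x - g y‖ ≤ L * ‖x - y‖)
    (x y : H) :
    f y ≤ f x + ⟪g x, y - x⟫ + L / 2 * ‖y - x‖ ^ 2 := by
  set d := y - x with hd
  set φ : ℝ → ℝ := fun t => f (x + t • d) - t * ⟪g x, d⟫ - L * t ^ 2 / 2 * ‖d‖ ^ 2 with hφ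
  have hφ' : ∀ t : ℝ, HasDerivAt φ (⟪g (x + t • d), d⟫ - ⟪g x, d⟫ - L * t * ‖d‖ ^ 2) t := by
    intro t
    have h1 := line_hasDerivAt f g hgrad x d t
    have h2 : HasDerivAt (fun t : ℝ => t * ⟪g x, d⟫) ⟪g x, d⟫ t := by
      simpa using (hasDerivAt_id t).mul_const (⟪g x, d⟫)
    have h3 : HasDerivAt (fun t : ℝ => L * t ^ 2 / 2 * ‖d‖ ^ 2) (L * t * ‖d‖ ^ 2) t := by
      have hp : HasDerivAt (fun t : ℝ => t ^ 2) (2 * t) t := by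
        simpa using hasDerivAt_pow 2 t
      have := ((hp.const_mul L).div_const 2).mul_const (‖d‖ ^ 2)
      exact this.congr_deriv (by ring)
    have h4 := (h1.sub h2).sub h3
    exact h4
  have hmono : φ 1 ≤ φ 0 := by
    have key : AntitoneOn φ (Set.Icc 0 1) := by
      apply antitoneOn_of_deriv_nonpos (convex_Icc 0 1)
      · have hdφ : Differentiable ℝ φ := fun t => (hφ' t).differentiableAt
        exact hdφ.continuous.continuousOn
      · intro t _
        exact (hφ' t).differentiableAt.differentiableWithinAt
      · intro t ht
        rw [(hφ' t).deriv]
        rw [interior_Icc] at ht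
        have h0 : ⟪g (x + t • d) - g x, d⟫ = ⟪g (x + t • d), d⟫ - ⟪g x, d⟫ :=
          inner_sub_left _ _ _
        have h1 : ⟪g (x + t • d) - g x, d⟫ ≤ ‖g (x + t • d) - g x‖ * ‖d‖ :=
          real_inner_le_norm _ _
        have h2 : ‖g (x + t • d) - g x‖ ≤ L * (t * ‖d‖) := by
          have := hlip (x + t • d) x
          simpa [norm_smul, abs_of_pos ht.1, mul_assoc] using this
        have h3 : ‖g (x + t • d) - g x‖ * ‖d‖ ≤ L * (t * ‖d‖) * ‖d‖ :=
          mul_le_mul_of_nonneg_right h2 (norm_nonneg d)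
        nlinarith
    exact key (by norm_num) (by norm_num) (by norm_num)
  have h0 : φ 0 = f x := by simp [hφ]
  have h1 : φ 1 = f y - ⟪g x, d⟫ - L / 2 * ‖d‖ ^ 2 := by
    simp only [hφ, one_smul, one_pow, one_mul, hd]
    have : x + (y - x) = y := by abel
    rw [this]; ring
  rw [h0, h1] at hmono
  linarith

/-- Stale-gradient descent estimate (core of Lemma 1 of the paper): if `f` has an
`L`-Lipschitz gradient `g`, `η > 0`, and the update `x' = x - η • g u` is performed with
a gradient evaluated at a stale point `u`, then
`f x' - f x ≤ ((L + 1)/2 - 1/η)·‖x' - x‖² + (L²/2)·‖x - u‖²`. -/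
theorem stale_gradient_descent_estimate
    {H : Type*} [NormedAddCommGroup H] [InnerProductSpace ℝ H] [CompleteSpace H]
    (f : H → ℝ) (g : H → H) (L : ℝ)
    (hgrad : ∀ x, HasGradientAt f (g x) x)
    (hlip : ∀ x y, ‖g x - g y‖ ≤ L * ‖x - y‖)
    (η : ℝ) (hη : 0 < η) (x u : H) :
    f (x - η • g u) - f x
      ≤ ((L + 1) / 2 - 1 / η) * ‖(x - η • g u) - x‖ ^ 2 + (L ^ 2 / 2) * ‖x - u‖ ^ 2 := by
  set x' := x - η • g u with hx'
  have hdiff : x' - x = -(η • g u) := by rw [hx']; abel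
  have hdesc := descent_lemma f g L hgrad hlip x x'
  have hnsq : ‖x' - x‖ ^ 2 = η ^ 2 * ‖g u‖ ^ 2 := by
    rw [hdiff, norm_neg, norm_smul, Real.norm_eq_abs, abs_of_pos hη, mul_pow]
  have hinner : ⟪g x, x' - x⟫ = -(η * ⟪g u, g u⟫) + η * ⟪g u - g x, g u⟫ := by
    rw [hdiff, inner_neg_right, real_inner_smul_right, inner_sub_left]
    ring
  have hgsq : ⟪g u, g u⟫ = ‖g u‖ ^ 2 := real_inner_self_eq_norm_sq _
  have hcs : ⟪g u - g x, g u⟫ ≤ L * ‖u - x‖ * ‖g u‖ := by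
    calc ⟪g u - g x, g u⟫ ≤ ‖g u - g x‖ * ‖g u‖ := real_inner_le_norm _ _
      _ ≤ L * ‖u - x‖ * ‖g u‖ :=
        mul_le_mul_of_nonneg_right (hlip u x) (norm_nonneg _)
  have hstep : η * ⟪g u - g x, g u⟫ ≤ L ^ 2 / 2 * ‖u - x‖ ^ 2 + η ^ 2 / 2 * ‖g u‖ ^ 2 := by
    nlinarith [sq_nonneg (L * ‖u - x‖ - η * ‖g u‖), mul_le_mul_of_nonneg_left hcs hη.le]
  have hux : ‖u - x‖ = ‖x - u‖ := norm_sub_rev _ _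
  have heq : ((L + 1) / 2 - 1 / η) * ‖x' - x‖ ^ 2
      = (L + 1) / 2 * (η ^ 2 * ‖g u‖ ^ 2) - η * ‖g u‖ ^ 2 := by
    rw [hnsq]; field_simp
  rw [hux] at hstep
  rw [hinner, hgsq, hnsq] at hdesc
  have hsplit : (L + 1) / 2 * (η ^ 2 * ‖g u‖ ^ 2)
      = L / 2 * (η ^ 2 * ‖g u‖ ^ 2) + η ^ 2 / 2 * ‖g u‖ ^ 2 := by ring
  rw [heq]
  linarith [hdesc, hstep, hsplit]
end

section
/- Let H be a real normed vector space, let u : ℕ → H be a sequence, let V ⊆ ℕ be a set of 'active' times, and let τ ≥ 1 be a natural number. Assume: (i) for every t, if t + 1 ∉ V then u(t+1) = u(t) (the sequence changes only at times in V); and (ii) for every t there exists s ∈ V with t < s ≤ t + τ (every window of τ consecutive times contains an active time). For each t let n(t) denote the least element of V that is strictly greater than t. Then for all natural numbers a ≤ b: Σ_{t=a}^{b} ‖u(n(t)) − u(t)‖² ≤ τ · Σ_{t=a}^{b+τ−1} ‖u(t+1) − u(t)‖². -/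
/-- Staleness-accumulation estimate (Eqs. (A.87-1)–(A.87-3)): if the sequence `u` only
changes at active times `V`, every window of `τ` consecutive times contains an active
time, and `n t` is the least active time strictly greater than `t`, then the total
squared change from each time to its next activation over `[a, b]` is bounded by `τ`
times the sum of consecutive squared increments over `[a, b + τ - 1]`. -/
theorem staleness_accumulation
    {H : Type*} [NormedAddCommGroup H] [NormedSpace ℝ H]
    (u : ℕ → H) (V : Set ℕ) (τ : ℕ) (hτ : 1 ≤ τ)
    (hidle : ∀ t : ℕ, t + 1 ∉ V → u (t + 1) = u t)
    (hactive : ∀ t : ℕ, ∃ s ∈ V, t < s ∧ s ≤ t + τ)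
    (n : ℕ → ℕ) (hn : ∀ t, IsLeast {s | s ∈ V ∧ t < s} (n t)) :
    ∀ a b : ℕ, a ≤ b →
      ∑ t ∈ Finset.Icc a b, ‖u (n t) - u t‖ ^ 2
        ≤ (τ : ℝ) * ∑ t ∈ Finset.Icc a (b + τ - 1), ‖u (t + 1) - u t‖ ^ 2 := by
  intro a b hab
  have hlt : ∀ t, t < n t := fun t => (hn t).1.2
  have hle : ∀ t, n t ≤ t + τ := by
    intro t
    obtain ⟨s, hsV, hts, hst⟩ := hactive t
    exact le_trans ((hn t).2 ⟨hsV, hts⟩) hst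
  have hconst : ∀ t s, t ≤ s → s < n t → u s = u t := by
    intro t s
    induction s with
    | zero => intro h _; simp [Nat.le_zero.mp h]
    | succ s ih =>
      intro hts hsn
      rcases Nat.lt_or_ge t (s + 1) with h | h
      · have hts' : t ≤ s := Nat.lt_succ_iff.mp h
        have hnot : s + 1 ∉ V := fun hmem =>
          absurd ((hn t).2 ⟨hmem, h⟩) (Nat.not_le.mpr hsn)
        rw [hidle s hnot, ih hts' (lt_trans (Nat.lt_succ_self s) hsn)]
      · rw [le_antisymm hts h]
  set g : ℕ → ℕ := fun t => n t - 1 with hg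
  set F : ℕ → ℝ := fun s => ‖u (s + 1) - u s‖ ^ 2 with hF
  have hFnonneg : ∀ s, 0 ≤ F s := fun s => sq_nonneg _
  have key : ∀ t, ‖u (n t) - u t‖ ^ 2 = F (g t) := by
    intro t
    have h1 : n t = g t + 1 := by
      have := hlt t; simp only [hg]; omega
    have h2 : u (g t) = u t := by
      refine hconst t (g t) ?_ ?_ <;> (have := hlt t; simp only [hg]; omega)
    simp only [hF, ← h1, h2]
  calc ∑ t ∈ Finset.Icc a b, ‖u (n t) - u t‖ ^ 2
      = ∑ t ∈ Finset.Icc a b, F (g t) := by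
        exact Finset.sum_congr rfl fun t _ => key t
    _ = ∑ s ∈ (Finset.Icc a b).image g,
          ((Finset.Icc a b).filter fun t => g t = s).card • F s :=
        Finset.sum_comp F g
    _ ≤ ∑ s ∈ (Finset.Icc a b).image g, (τ : ℝ) * F s := by
        refine Finset.sum_le_sum fun s hs => ?_
        rw [nsmul_eq_mul]
        refine mul_le_mul_of_nonneg_right ?_ (hFnonneg s)
        have hcard : ((Finset.Icc a b).filter fun t => g t = s).card ≤ τ := by
          have hsub : ((Finset.Icc a b).filter fun t => g t = s) ⊆
              Finset.Icc (s + 1 - τ) s := by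
            intro t ht
            rw [Finset.mem_filter] at ht
            obtain ⟨_, hgt⟩ := ht
            have h1 := hlt t
            have h2 := hle t
            simp only [hg] at hgt
            rw [Finset.mem_Icc]
            omega
          calc _ ≤ (Finset.Icc (s + 1 - τ) s).card := Finset.card_le_card hsub
            _ ≤ τ := by rw [Nat.card_Icc]; omega
        exact_mod_cast hcard
    _ = (τ : ℝ) * ∑ s ∈ (Finset.Icc a b).image g, F s := by
        rw [Finset.mul_sum]
    _ ≤ (τ : ℝ) * ∑ s ∈ Finset.Icc a (b + τ - 1), F s := by
        refine mul_le_mul_of_nonneg_left ?_ (by positivity)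
        refine Finset.sum_le_sum_of_subset_of_nonneg ?_ fun s _ _ => hFnonneg s
        intro s hs
        rw [Finset.mem_image] at hs
        obtain ⟨t, ht, hgt⟩ := hs
        rw [Finset.mem_Icc] at ht ⊢
        have h1 := hlt t
        have h2 := hle t
        simp only [hg] at hgt
        omega
end
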